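/- arXiv:1808.05048 — 7 statements merged into one kernel-verified Lean document; each statement's English description precedes it below -/
import Mathlib

section
/- If Φ : Mₙ(ℂ) → Mₘ(ℂ) is a linear map such that the Choi matrix C_Φ = Σ_{i,j} E_{ij} ⊗ Φ(E_{ij}) is positive semidefinite, then there exist matrices K₁,…,K_p ∈ M_{m,n}(ℂ) such that Φ(X) = Σᵢ Kᵢ X Kᵢ* for all X. -/
open Matrix Kronecker ComplexOrder

theorem stmt0 {n m : ℕ}
    (Φ : Matrix (Fin n) (Fin n) ℂ →ₗ[ℂ] Matrix (Fin m) (Fin m) ℂ)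
    (h : (∑ i : Fin n, ∑ j : Fin n,
        Matrix.single i j (1 : ℂ) ⊗ₖ Φ (Matrix.single i j 1)).PosSemidef) :
    ∃ (p : ℕ) (K : Fin p → Matrix (Fin m) (Fin n) ℂ),
      ∀ X, Φ X = ∑ i, K i * X * (K i)ᴴ := by
  obtain ⟨B, hB⟩ := (by
    open scoped MatrixOrder in
    obtain ⟨B, hB⟩ := CStarAlgebra.nonneg_iff_eq_star_mul_self.mp h.nonneg
    exact ⟨B, by rw [hB, Matrix.star_eq_conjTranspose]⟩ :
      ∃ B : Matrix (Fin n × Fin m) (Fin n × Fin m) ℂ, (∑ i : Fin n, ∑ j : Fin n,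
        Matrix.single i j (1 : ℂ) ⊗ₖ Φ (Matrix.single i j 1)) = Bᴴ * B)
  have hentry : ∀ (i j : Fin n) (a b : Fin m),
      Φ (single i j 1) a b
        = ∑ k : Fin n × Fin m, star (B k (i, a)) * B k (j, b) := by
    intro i j a b
    have h1 := congrFun (congrFun hB (i, a)) (j, b)
    simp only [Matrix.sum_apply, Matrix.kroneckerMap_apply, Matrix.mul_apply,
      Matrix.conjTranspose_apply, Matrix.single_apply_same,
      Matrix.single, Matrix.of_apply, ite_and, ite_mul, one_mul, zero_mul,
      Finset.sum_ite_eq, Finset.sum_ite_eq', Finset.mem_univ, if_true] at h1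
    simpa [Matrix.single, ite_and] using h1
  refine ⟨n * m, fun k => Matrix.of fun a i =>
      star (B (finProdFinEquiv.symm k) (i, a)), ?_⟩
  intro X
  ext a b
  have hsum : (∑ i : Fin (n*m),
      (Matrix.of fun a i' => star (B (finProdFinEquiv.symm i) (i', a))) * X *
        (Matrix.of fun a i' => star (B (finProdFinEquiv.symm i) (i', a)))ᴴ) a b
      = ∑ k : Fin n × Fin m,
        ((Matrix.of fun a i' => star (B k (i', a))) * X *
          (Matrix.of fun a i' => star (B k (i', a)))ᴴ) a b := by
    rw [Matrix.sum_apply]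
    exact Fintype.sum_equiv finProdFinEquiv.symm _ _ (fun k => rfl)
  rw [hsum]
  have hX : Φ X a b = ∑ i : Fin n, ∑ j : Fin n, X i j * Φ (single i j 1) a b := by
    conv_lhs => rw [matrix_eq_sum_single X]
    rw [map_sum]
    simp only [map_sum, Matrix.sum_apply]
    refine Finset.sum_congr rfl fun i _ => Finset.sum_congr rfl fun j _ => ?_
    rw [show single i j (X i j) = X i j • single i j (1:ℂ) by simp,
      LinearMap.map_smul, Matrix.smul_apply, smul_eq_mul]
  rw [hX]
  simp only [hentry, Matrix.mul_apply, Matrix.conjTranspose_apply, Matrix.of_apply,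
    star_star, Finset.mul_sum, Finset.sum_mul]
  -- LHS : ∑ i ∑ j ∑ k, RHS : ∑ k ∑ j ∑ i (roughly)
  conv_lhs => enter [2, i]; rw [Finset.sum_comm]
  rw [Finset.sum_comm]
  conv_rhs => enter [2, k]; rw [Finset.sum_comm]
  refine Finset.sum_congr rfl fun k _ => Finset.sum_congr rfl fun i _ =>
    Finset.sum_congr rfl fun j _ => ?_
  ring
end

section
/- Any correlation matrix of the form z z* with z ∈ ℂⁿ, |zᵢ| = 1 for all i, is an extreme point of the set 𝓔ₙ of n×n correlation matrices. -/
open Matrix ComplexOrder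

lemma psd_entry_normSq_le {n : ℕ} {M : Matrix (Fin n) (Fin n) ℂ} (hM : M.PosSemidef)
    (i j : Fin n) (hij : i ≠ j) (hii : M i i = 1) (hjj : M j j = 1) :
    Complex.normSq (M i j) ≤ 1 := by
  set x : Fin n → ℂ := Pi.single i (-(M i j)) + Pi.single j 1 with hx
  have h0 := hM.dotProduct_mulVec_nonneg x
  have hji : M j i = star (M i j) := by
    conv_lhs => rw [← hM.1]
    simp [conjTranspose_apply]
  have hstar : star x = Pi.single i (star (-(M i j))) + Pi.single j (star (1:ℂ)) := by
    rw [hx]; ext k; by_cases h1 : k = i <;> by_cases h2 : k = j <;>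
      simp_all [Pi.single_apply]
  have hval : star x ⬝ᵥ (M *ᵥ x) = 1 - Complex.normSq (M i j) := by
    rw [hx, mulVec_add, Matrix.mulVec_single, Matrix.mulVec_single, ← hx, hstar,
      add_dotProduct, dotProduct_add, dotProduct_add,
      single_dotProduct, single_dotProduct,
      single_dotProduct, single_dotProduct]
    simp [hii, hjj, hji]
    rw [Complex.normSq_eq_conj_mul_self]; ring
  rw [hval] at h0
  have := h0.1
  simp [Complex.sub_re] at this
  linarith

lemma disc_extreme {a b : ℂ} {t : ℝ} (ht0 : 0 < t) (ht1 : t < 1)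
    (ha : Complex.normSq a ≤ 1) (hb : Complex.normSq b ≤ 1)
    (hc : Complex.normSq ((t : ℂ) * a + ((1 - t : ℝ) : ℂ) * b) = 1) : a = b := by
  have hre : ((t : ℂ) * a + ((1 - t : ℝ) : ℂ) * b).re = t * a.re + (1 - t) * b.re := by
    simp [Complex.add_re, Complex.mul_re]
  have him : ((t : ℂ) * a + ((1 - t : ℝ) : ℂ) * b).im = t * a.im + (1 - t) * b.im := by
    simp [Complex.add_im, Complex.mul_im]
  rw [Complex.normSq_apply, hre, him] at hc
  rw [Complex.normSq_apply] at ha hb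
  have htt : 0 < t * (1 - t) := mul_pos ht0 (by linarith)
  have hk : t * (1 - t) * ((a.re - b.re) ^ 2 + (a.im - b.im) ^ 2) ≤ 0 := by nlinarith
  have hsum : (a.re - b.re) ^ 2 + (a.im - b.im) ^ 2 ≤ 0 := nonpos_of_mul_nonpos_right ?_ htt
  · have e1 : a.re = b.re := by nlinarith [sq_nonneg (a.re - b.re), sq_nonneg (a.im - b.im)]
    have e2 : a.im = b.im := by nlinarith [sq_nonneg (a.re - b.re), sq_nonneg (a.im - b.im)]
    exact Complex.ext e1 e2
  · linarith [hk]

theorem stmt8 {n : ℕ} (z : Fin n → ℂ) (hz : ∀ i, ‖z i‖ = 1)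
    (A B : Matrix (Fin n) (Fin n) ℂ)
    (hA : A.PosSemidef) (hA1 : ∀ i, A i i = 1)
    (hB : B.PosSemidef) (hB1 : ∀ i, B i i = 1)
    (t : ℝ) (ht0 : 0 < t) (ht1 : t < 1)
    (h : (Matrix.of fun i j => z i * star (z j)) = t • A + (1 - t) • B) :
    A = Matrix.of (fun i j => z i * star (z j)) ∧
      B = Matrix.of fun i j => z i * star (z j) := by
  have key : ∀ i j, A i j = z i * star (z j) ∧ B i j = z i * star (z j) := by
    intro i j
    have hentry : z i * star (z j) = (t : ℂ) * A i j + ((1 - t : ℝ) : ℂ) * B i j := by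
      have := congrFun (congrFun h i) j
      simpa [Matrix.add_apply, Matrix.smul_apply, Complex.real_smul] using this
    by_cases hij : i = j
    · subst hij
      have hn : Complex.normSq (z i) = 1 := by nlinarith [Complex.sq_norm (z i), hz i]
      have hzz : z i * star (z i) = 1 := by
        have := Complex.mul_conj (z i)
        rw [show star (z i) = (starRingEnd ℂ) (z i) from rfl, this, hn]
        simp
      exact ⟨by rw [hA1, hzz], by rw [hB1, hzz]⟩
    · have hnz : Complex.normSq (z i * star (z j)) = 1 := by
        rw [Complex.normSq_mul, show star (z j) = (starRingEnd ℂ) (z j) from rfl,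
          Complex.normSq_conj]
        have h1 : Complex.normSq (z i) = 1 := by nlinarith [Complex.sq_norm (z i), hz i]
        have h2 : Complex.normSq (z j) = 1 := by nlinarith [Complex.sq_norm (z j), hz j]
        rw [h1, h2]; ring
      have hab : A i j = B i j := by
        apply disc_extreme ht0 ht1 (psd_entry_normSq_le hA i j hij (hA1 i) (hA1 j))
          (psd_entry_normSq_le hB i j hij (hB1 i) (hB1 j))
        rw [← hentry]; exact hnz
      have : z i * star (z j) = A i j := by
        rw [hentry, hab]
        push_cast
        ring
      exact ⟨this.symm, hab ▸ this.symm⟩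
  constructor <;> ext i j <;> simp [Matrix.of_apply, (key i j).1, (key i j).2]
end

section
/- Let C ∈ 𝓔ₙ be a correlation matrix with Gram vectors w₁,…,wₙ ∈ ℂ^p (so wᵢ* wⱼ = c_{ij}), and let Φ(X) = X ∘ C with Kraus operators D_{v₁},…,D_{v_p} coming from the corresponding resolution C = Σ vᵢvᵢ*. Then the complementary channel satisfies Φ^C(X) = Σ_{i=1}^n x_{ii} (wᵢ wᵢ*)ᵀ. -/
open Matrix ComplexOrder

theorem stmt11 {n p : ℕ} (C : Matrix (Fin n) (Fin n) ℂ) (hC : C.PosSemidef)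
    (hdiag : ∀ i, C i i = 1)
    (w : Fin n → Fin p → ℂ) (hGram : ∀ i j, ∑ k, star (w i k) * w j k = C i j)
    (v : Fin p → Fin n → ℂ) (hv : ∀ i j, v i j = star (w j i))
    (X : Matrix (Fin n) (Fin n) ℂ) :
    ∑ i : Fin p, ∑ j : Fin p,
        ((Matrix.diagonal (v j))ᴴ * Matrix.diagonal (v i) * X).trace •
          Matrix.single i j (1 : ℂ) =
      ∑ i : Fin n, X i i • Matrix.of fun a b => star (w i a) * w i b := by
  ext a b
  simp only [Matrix.sum_apply, Matrix.smul_apply, Matrix.single,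
    Matrix.trace, Matrix.diag, Matrix.mul_apply, Matrix.diagonal_apply,
    Matrix.conjTranspose_apply, Matrix.of_apply, smul_eq_mul, hv,
    apply_ite (star : ℂ → ℂ), star_zero, star_star]
  simp only [ite_mul, zero_mul, Finset.sum_ite_eq', Finset.mem_univ, if_true,
    mul_ite, mul_one, mul_zero, Finset.sum_ite_eq]
  rw [Finset.sum_eq_single a (fun c _ hc => Finset.sum_eq_zero fun d _ => if_neg (by simp [hc]))
    (fun h => absurd (Finset.mem_univ a) h),
    Finset.sum_eq_single b (fun d _ hd => if_neg (by simp [hd]))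
    (fun h => absurd (Finset.mem_univ b) h), if_pos ⟨rfl, rfl⟩]
  refine Finset.sum_congr rfl fun k _ => ?_
  ring
end

section
/- With the notation of the previous statement, the adjoint of the complementary channel of a Schur product channel satisfies Φ^{C†}(X) = Σ_{i=1}^n (wᵢᵀ X conj(wᵢ)) E_{ii}: its output is diagonal with entries given by the quadratic forms of X against the conjugated Gram vectors. -/
open Matrix ComplexOrder

theorem stmt12 {n p : ℕ} (C : Matrix (Fin n) (Fin n) ℂ) (hC : C.PosSemidef)
    (hdiag : ∀ i, C i i = 1)
    (w : Fin n → Fin p → ℂ) (hGram : ∀ i j, ∑ k, star (w i k) * w j k = C i j)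
    (v : Fin p → Fin n → ℂ) (hv : ∀ i j, v i j = star (w j i))
    (X : Matrix (Fin n) (Fin n) ℂ) (Y : Matrix (Fin p) (Fin p) ℂ) :
    ((∑ i : Fin p, ∑ j : Fin p,
        ((Matrix.diagonal (v j))ᴴ * Matrix.diagonal (v i) * X).trace •
          Matrix.single i j (1 : ℂ))ᴴ * Y).trace =
      (Xᴴ * ∑ i : Fin n,
        (∑ a, ∑ b, w i a * Y a b * star (w i b)) •
          Matrix.single i i (1 : ℂ)).trace := by
  simp only [Matrix.trace, Matrix.diag, Matrix.mul_apply, Matrix.conjTranspose_apply,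
    Matrix.sum_apply, Matrix.smul_apply, Matrix.single, Matrix.of_apply,
    Matrix.diagonal_apply, hv, smul_eq_mul, star_sum, star_mul', star_star,
    apply_ite (star : ℂ → ℂ), ite_and,
    Finset.mul_sum, Finset.sum_mul, mul_ite, ite_mul, mul_zero, zero_mul, mul_one,
    Finset.sum_ite_eq, Finset.sum_ite_eq', Finset.mem_univ, if_true, star_zero, Finset.sum_ite_irrel, Finset.sum_const_zero]
  conv_lhs => enter [2,x]; rw [Finset.sum_comm]
  rw [Finset.sum_comm]
  refine Finset.sum_congr rfl fun m _ => ?_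
  rw [Finset.sum_comm]
  refine Finset.sum_congr rfl fun a _ => ?_
  refine Finset.sum_congr rfl fun b _ => ?_
  ring
end

section
/- Let Φ be a quantum channel on Mₙ(ℂ) with Kraus operators K₁,…,K_p, and let V₁,…,V_p ∈ M_k(ℂ). Then U = Σᵢ Kᵢ ⊗ Vᵢ satisfies U*U = Iₙ ⊗ I_k if and only if for every A in the range of Φ^C, Σ_{i,j} a_{ij} Vⱼ* Vᵢ = Tr(A) I_k. -/
open Matrix Kronecker

section aux
variable {n p k : ℕ}

lemma kronCT (A : Matrix (Fin n) (Fin n) ℂ) (B : Matrix (Fin k) (Fin k) ℂ) :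
    (A ⊗ₖ B)ᴴ = Aᴴ ⊗ₖ Bᴴ := by
  ext ⟨a, b⟩ ⟨c, d⟩
  simp [Matrix.conjTranspose_apply, star_mul']

lemma phiC_apply (K : Fin p → Matrix (Fin n) (Fin n) ℂ) (X : Matrix (Fin n) (Fin n) ℂ)
    (a b : Fin p) :
    (∑ i : Fin p, ∑ j : Fin p,
        ((K i)ᴴ * K j * X).trace • Matrix.single j i (1 : ℂ)) a b
      = ((K b)ᴴ * K a * X).trace := by
  simp [Matrix.sum_apply, Matrix.single, ite_and, Finset.sum_ite_eq,
    Finset.sum_ite_eq']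

lemma trace_mul_std (M : Matrix (Fin n) (Fin n) ℂ) (a c : Fin n) :
    (M * Matrix.single c a (1 : ℂ)).trace = M a c := by
  simp [Matrix.trace, Matrix.diag, Matrix.mul_apply, Matrix.single, ite_and,
    Finset.sum_ite_eq, Finset.sum_ite_eq']

lemma phiC_trace (K : Fin p → Matrix (Fin n) (Fin n) ℂ)
    (hTP : ∑ i, (K i)ᴴ * K i = 1) (X : Matrix (Fin n) (Fin n) ℂ) :
    (∑ i : Fin p, ∑ j : Fin p,
        ((K i)ᴴ * K j * X).trace • Matrix.single j i (1 : ℂ)).trace = X.trace := by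
  simp only [Matrix.trace_sum, Matrix.trace_smul, smul_eq_mul]
  have h4 : ∀ i : Fin p, ∑ j : Fin p,
      ((K i)ᴴ * K j * X).trace * (Matrix.single j i (1 : ℂ)).trace
        = ((K i)ᴴ * K i * X).trace := by
    intro i
    rw [Finset.sum_eq_single i]
    · simp
    · intro j _ hj
      rw [Matrix.trace_single_eq_of_ne (h := hj), mul_zero]
    · simp
  rw [Finset.sum_congr rfl fun i _ => h4 i, ← Matrix.trace_sum, ← Finset.sum_mul, hTP, one_mul]

end aux

theorem stmt15 {n p k : ℕ} (K : Fin p → Matrix (Fin n) (Fin n) ℂ)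
    (hTP : ∑ i, (K i)ᴴ * K i = 1) (V : Fin p → Matrix (Fin k) (Fin k) ℂ) :
    (∑ i, K i ⊗ₖ V i)ᴴ * (∑ i, K i ⊗ₖ V i) = 1 ↔
      ∀ A : Matrix (Fin p) (Fin p) ℂ,
        (∃ X : Matrix (Fin n) (Fin n) ℂ,
          A = ∑ i : Fin p, ∑ j : Fin p,
            ((K i)ᴴ * K j * X).trace • Matrix.single j i (1 : ℂ)) →
        ∑ i : Fin p, ∑ j : Fin p, A i j • ((V j)ᴴ * V i) =
          A.trace • (1 : Matrix (Fin k) (Fin k) ℂ) := by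
  have hUU : (∑ i, K i ⊗ₖ V i)ᴴ * (∑ i, K i ⊗ₖ V i)
      = ∑ i, ∑ j, ((K i)ᴴ * K j) ⊗ₖ ((V i)ᴴ * V j) := by
    rw [conjTranspose_sum, Finset.sum_mul_sum]
    simp [kronCT, Matrix.mul_kronecker_mul]
  have hent : ∀ (a c : Fin n) (b d : Fin k),
      ((∑ i, K i ⊗ₖ V i)ᴴ * (∑ i, K i ⊗ₖ V i)) (a, b) (c, d)
        = ∑ i, ∑ j, ((K i)ᴴ * K j) a c * ((V i)ᴴ * V j) b d := by
    intro a c b d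
    rw [hUU]
    simp [Matrix.sum_apply]
  constructor
  · intro h A hA
    obtain ⟨X, rfl⟩ := hA
    rw [phiC_trace K hTP X]
    have hN : ∀ b d : Fin k,
        (∑ i : Fin p, ∑ j : Fin p, ((V j)ᴴ * V i) b d • ((K j)ᴴ * K i))
          = if b = d then (1 : Matrix (Fin n) (Fin n) ℂ) else 0 := by
      intro b d
      ext a c
      have h1 := congrFun (congrFun h (a, b)) (c, d)
      rw [hent] at h1
      have h2 : (1 : Matrix (Fin n × Fin k) (Fin n × Fin k) ℂ) (a, b) (c, d)
          = if a = c ∧ b = d then 1 else 0 := by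
        rw [Matrix.one_apply]
        simp [Prod.ext_iff]
      rw [h2] at h1
      have h3 : (∑ i : Fin p, ∑ j : Fin p, ((V j)ᴴ * V i) b d • ((K j)ᴴ * K i)) a c
          = ∑ i : Fin p, ∑ j : Fin p, ((K i)ᴴ * K j) a c * ((V i)ᴴ * V j) b d := by
        rw [Finset.sum_comm]
        simp [Matrix.sum_apply, mul_comm]
      rw [h3, h1]
      by_cases hbd : b = d <;> by_cases hac : a = c <;>
        simp [hbd, hac, Matrix.one_apply]
    ext b d
    have lhs_eq : (∑ i : Fin p, ∑ j : Fin p,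
        (∑ i' : Fin p, ∑ j' : Fin p,
          ((K i')ᴴ * K j' * X).trace • Matrix.single j' i' (1 : ℂ)) i j
          • ((V j)ᴴ * V i)) b d
        = ((∑ i : Fin p, ∑ j : Fin p, ((V j)ᴴ * V i) b d • ((K j)ᴴ * K i)) * X).trace := by
      simp only [phiC_apply]
      simp only [Matrix.sum_apply, Matrix.smul_apply, smul_eq_mul,
        Matrix.sum_mul, Matrix.smul_mul, Matrix.trace_sum, Matrix.trace_smul]
      exact Finset.sum_congr rfl fun i _ => Finset.sum_congr rfl fun j _ => mul_comm _ _
    rw [lhs_eq, hN b d]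
    by_cases hbd : b = d <;> simp [hbd, Matrix.one_apply]
  · intro h
    ext ⟨a, b⟩ ⟨c, d⟩
    rw [hent]
    have hA := h _ ⟨Matrix.single c a (1 : ℂ), rfl⟩
    rw [phiC_trace K hTP] at hA
    rw [Finset.sum_congr rfl fun i _ => Finset.sum_congr rfl fun j _ => by
      rw [phiC_apply, trace_mul_std]] at hA
    have h1 := congrFun (congrFun hA b) d
    simp only [Matrix.sum_apply, Matrix.smul_apply, smul_eq_mul] at h1
    rw [Finset.sum_comm] at h1
    rw [h1]
    have htr2 : (Matrix.single c a (1 : ℂ)).trace = if a = c then 1 else 0 := by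
      by_cases hac : a = c
      · subst hac; simp [Matrix.trace_single_eq_same]
      · rw [Matrix.trace_single_eq_of_ne (h := Ne.symm hac)]; simp [hac]
    rw [htr2, Matrix.one_apply, Matrix.one_apply]
    simp only [Prod.ext_iff, ite_and, ite_mul, mul_ite, zero_mul, mul_zero, one_mul, mul_one]
    by_cases h1 : b = d <;> by_cases h2 : a = c <;> simp [h1, h2]
end

section
/- Suppose Φ₁, Φ₂ are quantum channels on Mₙ(ℂ) with Kraus operators {Kᵢ}ᵢ₌₁^p, {Lᵢ}ᵢ₌₁^q, factorized respectively by matrices {V̂ᵢ} ⊂ M_{k₁}(ℂ) and {Ŵᵢ} ⊂ M_{k₂}(ℂ) (trace-orthonormal, with Σ K_i ⊗ V̂_i and Σ L_i ⊗ Ŵ_i unitary). Then for t ∈ (0,1), the channel Φ = tΦ₁ + (1−t)Φ₂ is factorized by the algebra M_{k₁}(ℂ) ⊕ M_{k₂}(ℂ) with trace tr(A⊕B) = t·tr₁(A) + (1−t)·tr₂(B), via the block-diagonal elements Xᵢ = (t^{−1/2} V̂ᵢ) ⊕ 0 for i ≤ p and Xᵢ = 0 ⊕ ((1−t)^{−1/2}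 Ŵ_{i−p}) for i > p: the operator Σᵢ K̃ᵢ ⊗ Xᵢ built from Kraus operators {√t Kᵢ} ∪ {√(1−t) Lᵢ} of Φ is unitary and the Xᵢ are trace-orthonormal. -/
open Matrix Kronecker

private lemma blkV {k₁ k₂ : ℕ} (A B : Matrix (Fin k₁) (Fin k₁) ℂ) :
    (Matrix.fromBlocks A 0 0 (0 : Matrix (Fin k₂) (Fin k₂) ℂ))ᴴ *
      Matrix.fromBlocks B 0 0 0 = Matrix.fromBlocks (Aᴴ * B) 0 0 0 := by
  rw [Matrix.fromBlocks_conjTranspose, Matrix.fromBlocks_multiply]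
  simp

private lemma blkW {k₁ k₂ : ℕ} (A B : Matrix (Fin k₂) (Fin k₂) ℂ) :
    (Matrix.fromBlocks (0 : Matrix (Fin k₁) (Fin k₁) ℂ) 0 0 A)ᴴ *
      Matrix.fromBlocks 0 0 0 B = Matrix.fromBlocks 0 0 0 (Aᴴ * B) := by
  rw [Matrix.fromBlocks_conjTranspose, Matrix.fromBlocks_multiply]
  simp

private lemma blkVW {k₁ k₂ : ℕ} (A : Matrix (Fin k₁) (Fin k₁) ℂ)
    (B : Matrix (Fin k₂) (Fin k₂) ℂ) :
    (Matrix.fromBlocks A 0 0 (0 : Matrix (Fin k₂) (Fin k₂) ℂ))ᴴ *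
      Matrix.fromBlocks 0 0 0 B = 0 := by
  rw [Matrix.fromBlocks_conjTranspose, Matrix.fromBlocks_multiply]
  simp [← Matrix.fromBlocks_zero]

private lemma blkWV {k₁ k₂ : ℕ} (A : Matrix (Fin k₁) (Fin k₁) ℂ)
    (B : Matrix (Fin k₂) (Fin k₂) ℂ) :
    (Matrix.fromBlocks (0 : Matrix (Fin k₁) (Fin k₁) ℂ) 0 0 B)ᴴ *
      Matrix.fromBlocks A 0 0 0 = 0 := by
  rw [Matrix.fromBlocks_conjTranspose, Matrix.fromBlocks_multiply]
  simp [← Matrix.fromBlocks_zero]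

theorem stmt16 {n p q k₁ k₂ : ℕ} (t : ℝ) (ht0 : 0 < t) (ht1 : t < 1)
    (K : Fin p → Matrix (Fin n) (Fin n) ℂ) (L : Fin q → Matrix (Fin n) (Fin n) ℂ)
    (V : Fin p → Matrix (Fin k₁) (Fin k₁) ℂ) (W : Fin q → Matrix (Fin k₂) (Fin k₂) ℂ)
    (hV : ∀ i j, ((V i)ᴴ * V j).trace = if i = j then 1 else 0)
    (hW : ∀ i j, ((W i)ᴴ * W j).trace = if i = j then 1 else 0)
    (hUV : (∑ i, K i ⊗ₖ V i) ∈ Matrix.unitaryGroup (Fin n × Fin k₁) ℂ)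
    (hUW : (∑ i, L i ⊗ₖ W i) ∈ Matrix.unitaryGroup (Fin n × Fin k₂) ℂ)
    (Kt : Fin p ⊕ Fin q → Matrix (Fin n) (Fin n) ℂ)
    (hKt : Kt = Sum.elim (fun i => (Real.sqrt t : ℂ) • K i)
      (fun j => (Real.sqrt (1 - t) : ℂ) • L j))
    (X : Fin p ⊕ Fin q → Matrix (Fin k₁ ⊕ Fin k₂) (Fin k₁ ⊕ Fin k₂) ℂ)
    (hX : X = Sum.elim
      (fun i => Matrix.fromBlocks ((Real.sqrt t : ℂ)⁻¹ • V i) 0 0 0)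
      (fun j => Matrix.fromBlocks 0 0 0 ((Real.sqrt (1 - t) : ℂ)⁻¹ • W j))) :
    (∑ i, Kt i ⊗ₖ X i) ∈ Matrix.unitaryGroup (Fin n × (Fin k₁ ⊕ Fin k₂)) ℂ ∧
      ∀ i j, (t : ℂ) * (∑ a : Fin k₁, ((X i)ᴴ * X j) (Sum.inl a) (Sum.inl a)) +
          ((1 - t : ℝ) : ℂ) * (∑ b : Fin k₂, ((X i)ᴴ * X j) (Sum.inr b) (Sum.inr b)) =
        if i = j then 1 else 0 := by
  have ht1' : (0:ℝ) < 1 - t := by linarith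
  have hsR : Real.sqrt t ≠ 0 := by positivity
  have hsR' : Real.sqrt (1 - t) ≠ 0 := by positivity
  have hs : (Real.sqrt t : ℂ) ≠ 0 := by exact_mod_cast hsR
  have hs' : (Real.sqrt (1 - t) : ℂ) ≠ 0 := by exact_mod_cast hsR'
  have hss : (Real.sqrt t : ℂ) * (Real.sqrt t : ℂ) = (t : ℂ) := by
    rw [← Complex.ofReal_mul, Real.mul_self_sqrt ht0.le]
  have hss' : (Real.sqrt (1 - t) : ℂ) * (Real.sqrt (1 - t) : ℂ) = ((1 - t : ℝ) : ℂ) := by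
    rw [← Complex.ofReal_mul, Real.mul_self_sqrt ht1'.le]
  set e := Equiv.prodSumDistrib (Fin n) (Fin k₁) (Fin k₂) with he
  have hU : (∑ i, Kt i ⊗ₖ X i)
      = (Matrix.fromBlocks (∑ i, K i ⊗ₖ V i) 0 0 (∑ i, L i ⊗ₖ W i)).submatrix e e := by
    subst hKt hX
    ext ⟨a, x⟩ ⟨b, y⟩
    rw [Fintype.sum_sum_type]
    cases x <;> cases y <;>
      simp only [Matrix.sum_apply, Matrix.submatrix_apply, he,
        Equiv.prodSumDistrib_apply_left, Equiv.prodSumDistrib_apply_right,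
        Matrix.fromBlocks_apply₁₁, Matrix.fromBlocks_apply₁₂,
        Matrix.fromBlocks_apply₂₁, Matrix.fromBlocks_apply₂₂,
        Matrix.add_apply, Matrix.kroneckerMap_apply, Sum.elim_inl, Sum.elim_inr,
        Matrix.smul_apply, Matrix.zero_apply, smul_eq_mul, mul_zero, zero_mul,
        Finset.sum_const_zero, add_zero, zero_add] <;>
      · refine Finset.sum_congr rfl fun i _ => ?_
        field_simp <;>
        ring
  refine ⟨?_, ?_⟩
  · rw [hU, Matrix.mem_unitaryGroup_iff']
    rw [Matrix.star_eq_conjTranspose, Matrix.conjTranspose_submatrix,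
      Matrix.submatrix_mul_equiv, Matrix.fromBlocks_conjTranspose,
      Matrix.fromBlocks_multiply]
    simp only [Matrix.mul_zero, Matrix.zero_mul, add_zero, zero_add,
      Matrix.conjTranspose_zero]
    rw [← Matrix.star_eq_conjTranspose, ← Matrix.star_eq_conjTranspose,
      hUV.1, hUW.1, Matrix.fromBlocks_one, Matrix.submatrix_one_equiv]
  · intro i j
    subst hX
    rcases i with i | i <;> rcases j with j | j
    · simp only [Sum.elim_inl, Sum.inl.injEq, blkV,
        Matrix.fromBlocks_apply₁₁, Matrix.fromBlocks_apply₂₂, Matrix.zero_apply,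
        Finset.sum_const_zero, mul_zero, add_zero]
      have h := hV i j
      simp only [Matrix.trace, Matrix.diag_apply] at h
      simp only [Matrix.conjTranspose_smul, Matrix.smul_mul, Matrix.mul_smul,
        Matrix.smul_apply, smul_eq_mul, Complex.star_def, map_inv₀, Complex.conj_ofReal,
        ← Finset.mul_sum]
      
      rw [h]
      rcases eq_or_ne i j with rfl | hij
      · simp only [if_pos rfl]
        rw [← hss]
        field_simp
      · simp [hij]
    · simp only [Sum.elim_inl, Sum.elim_inr, blkVW, Matrix.zero_apply,
        Finset.sum_const_zero, mul_zero, add_zero, zero_add]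
      simp
    · simp only [Sum.elim_inl, Sum.elim_inr, blkWV, Matrix.zero_apply,
        Finset.sum_const_zero, mul_zero, add_zero, zero_add]
      simp
    · simp only [Sum.elim_inr, Sum.inr.injEq, blkW,
        Matrix.fromBlocks_apply₁₁, Matrix.fromBlocks_apply₂₂, Matrix.zero_apply,
        Finset.sum_const_zero, mul_zero, zero_add]
      have h := hW i j
      simp only [Matrix.trace, Matrix.diag_apply] at h
      simp only [Matrix.conjTranspose_smul, Matrix.smul_mul, Matrix.mul_smul,
        Matrix.smul_apply, smul_eq_mul, Complex.star_def, map_inv₀, Complex.conj_ofReal,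
        ← Finset.mul_sum]
      
      rw [h]
      rcases eq_or_ne i j with rfl | hij
      · simp only [if_pos rfl]
        rw [← hss']
        field_simp
      · simp [hij]
end

section
/- Let Φ be a trace-preserving CP map on Mₙ(ℂ) with Kraus operators K₁,…,K_p, and let Q ∈ M_{r,p}(ℂ) satisfy Φ^{C†}(Q*Q) = Iₙ. Then the operators K̂_k = Σⱼ q_{kj} Kⱼ (k = 1,…,r) define a trace-preserving CP map Φ̂(X) = Σ_k K̂_k X K̂_k*, and the kernel of the Choi matrix C_Φ is contained in the kernel of C_{Φ̂}. -/
open Matrix Kronecker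

lemma choiEntry {n q : ℕ} (M : Fin q → Matrix (Fin n) (Fin n) ℂ) (ab cd : Fin n × Fin n) :
    (∑ i : Fin n, ∑ j : Fin n, Matrix.single i j (1 : ℂ) ⊗ₖ
        ∑ l, M l * Matrix.single i j 1 * (M l)ᴴ) ab cd
    = ∑ l, M l ab.2 ab.1 * star (M l cd.2 cd.1) := by
  obtain ⟨a,b⟩ := ab; obtain ⟨c,d⟩ := cd
  simp [Matrix.sum_apply, Matrix.kroneckerMap_apply, Matrix.single, Matrix.mul_apply,
    Finset.mul_sum, Finset.sum_mul, ite_and, apply_ite]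

lemma choiMulVec {n q : ℕ} (M : Fin q → Matrix (Fin n) (Fin n) ℂ) (x : Fin n × Fin n → ℂ)
    (ab : Fin n × Fin n) :
    (∑ i : Fin n, ∑ j : Fin n, Matrix.single i j (1 : ℂ) ⊗ₖ
        ∑ l, M l * Matrix.single i j 1 * (M l)ᴴ).mulVec x ab
    = ∑ l, M l ab.2 ab.1 * ∑ cd : Fin n × Fin n, star (M l cd.2 cd.1) * x cd := by
  simp only [Matrix.mulVec, dotProduct, choiEntry, Finset.sum_mul, Finset.mul_sum]
  rw [Finset.sum_comm]
  simp [mul_assoc]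

theorem stmt17 {n p r : ℕ} (K : Fin p → Matrix (Fin n) (Fin n) ℂ)
    (hTP : ∑ i, (K i)ᴴ * K i = 1) (Q : Matrix (Fin r) (Fin p) ℂ)
    (hQ : ∑ i : Fin p, ∑ j : Fin p, (Qᴴ * Q) i j • ((K i)ᴴ * K j) = 1) :
    (∑ l : Fin r, (∑ j, Q l j • K j)ᴴ * ∑ j, Q l j • K j = 1) ∧
      ∀ x : Fin n × Fin n → ℂ,
        (∑ i : Fin n, ∑ j : Fin n, Matrix.single i j (1 : ℂ) ⊗ₖ
            ∑ l : Fin p, K l * Matrix.single i j 1 * (K l)ᴴ).mulVec x = 0 →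
        (∑ i : Fin n, ∑ j : Fin n, Matrix.single i j (1 : ℂ) ⊗ₖ
            ∑ l : Fin r, (∑ a, Q l a • K a) * Matrix.single i j 1 *
              (∑ a, Q l a • K a)ᴴ).mulVec x = 0 := by
  constructor
  · rw [← hQ]
    simp only [Matrix.conjTranspose_sum, Matrix.conjTranspose_smul, Finset.sum_mul,
      Finset.mul_sum, Matrix.mul_apply, Matrix.conjTranspose_apply, Finset.sum_smul,
      Matrix.smul_mul, Matrix.mul_smul, smul_smul]
    calc ∑ l : Fin r, ∑ i : Fin p, ∑ j : Fin p, (Q l i * star (Q l j)) • ((K j)ᴴ * K i)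
        = ∑ l : Fin r, ∑ j : Fin p, ∑ i : Fin p, (Q l i * star (Q l j)) • ((K j)ᴴ * K i) :=
          Finset.sum_congr rfl fun _ _ => Finset.sum_comm
      _ = ∑ j : Fin p, ∑ l : Fin r, ∑ i : Fin p, (Q l i * star (Q l j)) • ((K j)ᴴ * K i) :=
          Finset.sum_comm
      _ = ∑ j : Fin p, ∑ i : Fin p, ∑ l : Fin r, (Q l i * star (Q l j)) • ((K j)ᴴ * K i) :=
          Finset.sum_congr rfl fun _ _ => Finset.sum_comm
      _ = ∑ j : Fin p, ∑ i : Fin p, ∑ l : Fin r, (star (Q l j) * Q l i) • ((K j)ᴴ * K i) := by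
          refine Finset.sum_congr rfl fun _ _ => Finset.sum_congr rfl fun _ _ =>
            Finset.sum_congr rfl fun _ _ => by rw [mul_comm]
  · intro x hx
    set s : Fin p → ℂ := fun l => ∑ cd : Fin n × Fin n, star (K l cd.2 cd.1) * x cd with hs
    have hxl : ∀ ab : Fin n × Fin n, ∑ l, K l ab.2 ab.1 * s l = 0 := by
      intro ab
      have := congrFun hx ab
      rwa [choiMulVec] at this
    have hsum : ∑ l, star (s l) * s l = 0 := by
      calc ∑ l, star (s l) * s l
          = ∑ ab : Fin n × Fin n, star (x ab) * ∑ l, K l ab.2 ab.1 * s l := by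
            simp only [Finset.mul_sum]
            rw [Finset.sum_comm]
            refine Finset.sum_congr rfl fun l _ => ?_
            rw [hs]
            simp only [star_sum, star_mul', star_star, Finset.sum_mul]
            exact Finset.sum_congr rfl fun cd _ => by ring
        _ = 0 := by simp [hxl]
    have hszero : ∀ l, s l = 0 := by
      intro l
      have h3 : ∑ l, Complex.normSq (s l) = 0 := by
        have h2 : ∑ l, (Complex.normSq (s l) : ℂ) = 0 := by
          simpa [Complex.normSq_eq_conj_mul_self] using hsum
        exact_mod_cast h2
      have := (Finset.sum_eq_zero_iff_of_nonneg (fun l _ => Complex.normSq_nonneg (s l))).mp h3 l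
        (Finset.mem_univ l)
      exact Complex.normSq_eq_zero.mp this
    have hhat : ∀ l : Fin r,
        (∑ cd : Fin n × Fin n, star ((∑ a, Q l a • K a) cd.2 cd.1) * x cd) = 0 := by
      intro l
      calc (∑ cd : Fin n × Fin n, star ((∑ a, Q l a • K a) cd.2 cd.1) * x cd)
          = ∑ a, star (Q l a) * s a := by
            simp only [Matrix.sum_apply, Matrix.smul_apply, smul_eq_mul, star_sum, star_mul',
              Finset.sum_mul]
            rw [Finset.sum_comm]
            refine Finset.sum_congr rfl fun a _ => ?_
            rw [hs, Finset.mul_sum]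
            exact Finset.sum_congr rfl fun cd _ => by ring
        _ = 0 := by simp [hszero]
    funext ab
    rw [choiMulVec]
    exact Finset.sum_eq_zero fun l _ => by rw [hhat l, mul_zero]
end
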